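/- Let N ≥ 1, let G be a simple graph on the vertex set Fin N with real Laplacian matrix L, and let d : Fin N → ℝ with d_i ∈ {0,1} for every vertex i. Set H = diagonal(d) + L. Then: (i) H is positive semidefinite; and (ii) H is positive definite if and only if for every vertex i there exists a vertex j with d_j = 1 that lies in the same connected component of G as i (i.e., every connected component of G contains a pinned vertex). -/

import Mathlib

open Matrix

lemma diag_quad (N : ℕ) (d : Fin N → ℝ) (x : Fin N → ℝ) :
    x ⬝ᵥ (Matrix.diagonal d *ᵥ x) = ∑ i, d i * (x i * x i) := by
  simp [dotProduct, mulVec_diagonal, mul_comm, mul_left_comm, mul_assoc]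

theorem stmt_3 (N : ℕ) (hN : 1 ≤ N) (G : SimpleGraph (Fin N)) [DecidableRel G.Adj]
    (d : Fin N → ℝ) (hd : ∀ i, d i = 0 ∨ d i = 1) :
    (Matrix.diagonal d + G.lapMatrix ℝ).PosSemidef ∧
    ((Matrix.diagonal d + G.lapMatrix ℝ).PosDef ↔
      ∀ i : Fin N, ∃ j : Fin N, d j = 1 ∧ G.Reachable i j) := by
  have hd0 : ∀ i, 0 ≤ d i := fun i => by rcases hd i with h | h <;> simp [h]
  have hD : (Matrix.diagonal d).PosSemidef := Matrix.PosSemidef.diagonal hd0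
  have hL : (G.lapMatrix ℝ).PosSemidef := SimpleGraph.posSemidef_lapMatrix ℝ G
  have hsum : (Matrix.diagonal d + G.lapMatrix ℝ).PosSemidef := hD.add hL
  -- quadratic form splits
  have hsplit : ∀ x : Fin N → ℝ,
      x ⬝ᵥ ((Matrix.diagonal d + G.lapMatrix ℝ) *ᵥ x)
        = x ⬝ᵥ (Matrix.diagonal d *ᵥ x) + x ⬝ᵥ (G.lapMatrix ℝ *ᵥ x) := by
    intro x; rw [add_mulVec, dotProduct_add]
  have hDq : ∀ x : Fin N → ℝ, 0 ≤ x ⬝ᵥ (Matrix.diagonal d *ᵥ x) := fun x => by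
    simpa using hD.dotProduct_mulVec_nonneg x
  have hLq : ∀ x : Fin N → ℝ, 0 ≤ x ⬝ᵥ (G.lapMatrix ℝ *ᵥ x) := fun x => by
    simpa using hL.dotProduct_mulVec_nonneg x
  have hLzero : ∀ x : Fin N → ℝ, x ⬝ᵥ (G.lapMatrix ℝ *ᵥ x) = 0 ↔
      ∀ i j : Fin N, G.Reachable i j → x i = x j := by
    intro x
    rw [← Matrix.toLinearMap₂'_apply']
    exact SimpleGraph.lapMatrix_toLinearMap₂'_apply'_eq_zero_iff_forall_reachable G x
  refine ⟨hsum, ?_, ?_⟩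
  · -- PosDef → every component pinned
    intro hPD i
    by_contra hcon
    push_neg at hcon
    -- x = indicator of the connected component of i
    set x : Fin N → ℝ := fun v => if G.Reachable i v then 1 else 0 with hx
    have hx0 : x ≠ 0 := by
      intro h
      have := congrFun h i
      simp [hx] at this
    have hxz : x ⬝ᵥ ((Matrix.diagonal d + G.lapMatrix ℝ) *ᵥ x) = 0 := by
      rw [hsplit]
      have h1 : x ⬝ᵥ (Matrix.diagonal d *ᵥ x) = 0 := by
        rw [diag_quad]
        apply Finset.sum_eq_zero
        intro j _
        by_cases hj : G.Reachable i j
        · have : d j = 0 := by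
            rcases hd j with h | h
            · exact h
            · exact absurd hj (hcon j h)
          simp [this]
        · simp [hx, hj]
      have h2 : x ⬝ᵥ (G.lapMatrix ℝ *ᵥ x) = 0 := by
        rw [hLzero]
        intro a b hab
        by_cases ha : G.Reachable i a
        · simp [hx, ha, ha.trans hab]
        · have hb : ¬ G.Reachable i b := fun hb => ha (hb.trans hab.symm)
          simp [hx, ha, hb]
      rw [h1, h2, add_zero]
    have := hPD.dotProduct_mulVec_pos hx0
    simp only [star_trivial] at this
    rw [hxz] at this
    exact lt_irrefl 0 this
  · -- pinned → PosDef
    intro hpin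
    refine posDef_iff_dotProduct_mulVec.mpr ⟨hsum.1, ?_⟩
    intro x hx0
    simp only [star_trivial]
    rcases lt_or_eq_of_le (hsum.dotProduct_mulVec_nonneg x) with h | h
    · simpa using h
    exfalso
    have h' : x ⬝ᵥ (Matrix.diagonal d *ᵥ x) + x ⬝ᵥ (G.lapMatrix ℝ *ᵥ x) = 0 := by
      rw [← hsplit]; simpa using h.symm
    have hDz : x ⬝ᵥ (Matrix.diagonal d *ᵥ x) = 0 :=
      le_antisymm (by linarith [hLq x]) (hDq x)
    have hLz : x ⬝ᵥ (G.lapMatrix ℝ *ᵥ x) = 0 := by linarith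
    have hconst := (hLzero x).mp hLz
    have hpinned : ∀ j, d j = 1 → x j = 0 := by
      intro j hj
      rw [diag_quad] at hDz
      have hterm : ∀ k ∈ Finset.univ, (0:ℝ) ≤ d k * (x k * x k) :=
        fun k _ => mul_nonneg (hd0 k) (mul_self_nonneg _)
      have := (Finset.sum_eq_zero_iff_of_nonneg hterm).mp hDz j (Finset.mem_univ j)
      rw [hj, one_mul] at this
      exact mul_self_eq_zero.mp this
    obtain ⟨i, hi⟩ := Function.ne_iff.mp hx0
    obtain ⟨j, hj1, hjr⟩ := hpin i
    exact hi (by rw [hconst i j hjr, hpinned j hj1]; rfl)
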